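/- arXiv:1911.06625 — 13 statements merged into one kernel-verified Lean document; each statement's English description precedes it below -/
import Mathlib

section
/- Let (M; ∨, ∧, ⊕, ⊖, 0) be a wEMV-algebra. Then (M; ⊕, 0) is an ordered monoid with respect to the lattice order, i.e., x ≤ y implies x ⊕ z ≤ y ⊕ z for every z ∈ M; moreover, for all x, y ∈ M, x ≤ y if and only if there exists a ∈ M such that y = x ⊕ a. -/
universe u

class WEMV (M : Type u) extends DistribLattice M, Zero M where
  oplus : M → M → M
  ominus : M → M → M
  zero_le : ∀ x : M, 0 ≤ x
  oplus_comm : ∀ x y : M, oplus x y = oplus y x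
  oplus_assoc : ∀ x y z : M, oplus (oplus x y) z = oplus x (oplus y z)
  oplus_zero : ∀ x : M, oplus x 0 = x
  ominus_oplus_le : ∀ x y : M, ominus (oplus x y) x ≤ y
  oplus_ominus : ∀ x y : M, oplus x (ominus y x) = x ⊔ y
  ominus_inf : ∀ x y : M, ominus x (x ⊓ y) = ominus x y
  ominus_ominus : ∀ x z : M, ominus z (ominus z x) = x ⊓ z
  ominus_sup : ∀ x y z : M, ominus z (x ⊔ y) = ominus z x ⊓ ominus z y
  inf_ominus : ∀ x y z : M, ominus (x ⊓ y) z = ominus x z ⊓ ominus y z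
  ominus_oplus_assoc : ∀ x y z : M, ominus x (oplus y z) = ominus (ominus x y) z
  oplus_sup : ∀ x y z : M, oplus x (y ⊔ z) = oplus x y ⊔ oplus x z

open WEMV

lemma mono {M : Type u} [WEMV M] : ∀ x y z : M, x ≤ y → oplus x z ≤ oplus y z := by
  intro x y z h
  have : oplus x z ⊔ oplus y z = oplus y z := by
    rw [oplus_comm x z, oplus_comm y z, ← oplus_sup, sup_eq_right.mpr h]
  exact le_of_sup_eq this

theorem stmt0 {M : Type u} [WEMV M] :
    (∀ x y z : M, x ≤ y → oplus x z ≤ oplus y z) ∧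
    (∀ x y : M, x ≤ y ↔ ∃ a : M, y = oplus x a) := by
  refine ⟨mono, fun x y => ⟨fun h => ⟨ominus y x, by rw [oplus_ominus, sup_eq_right.mpr h]⟩, ?_⟩⟩
  rintro ⟨a, rfl⟩
  have h0 : oplus (0 : M) x ≤ oplus a x := mono 0 a x (zero_le a)
  rwa [oplus_comm, oplus_zero, oplus_comm] at h0
end

section
/- Let (M; ∨, ∧, ⊕, ⊖, 0) be a wEMV-algebra. For all x, z ∈ M, the element z ⊖ x is the minimum of the set {t ∈ M : t ≤ z and t ⊕ (z ∧ x) = z}; in particular, if x ≤ z, then z ⊖ x is the minimum of {t ∈ M : t ≤ z and x ⊕ t = z}. -/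
universe u

open WEMV

lemma wemv_ominus_le_self {M : Type u} [WEMV M] (z a : M) : ominus z a ≤ z := by
  have h0 : ominus z (0 : M) ≤ z := by
    have := ominus_oplus_le (0 : M) z
    rwa [oplus_comm, oplus_zero] at this
  have h1 : ominus z a ≤ ominus z 0 := by
    have := ominus_sup a (0 : M) z
    rw [sup_eq_left.mpr (WEMV.zero_le a)] at this
    rw [this]; exact inf_le_right
  exact h1.trans h0

theorem stmt1 {M : Type u} [WEMV M] (x z : M) :
    IsLeast {t : M | t ≤ z ∧ oplus t (z ⊓ x) = z} (ominus z x) ∧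
    (x ≤ z → IsLeast {t : M | t ≤ z ∧ oplus x t = z} (ominus z x)) := by
  have hmem : oplus (ominus z x) (z ⊓ x) = z := by
    have h := oplus_ominus (z ⊓ x) z
    rw [ominus_inf] at h
    rw [oplus_comm, h, sup_eq_right.mpr inf_le_left]
  have hle : ominus z x ≤ z := wemv_ominus_le_self z x
  have hlb : ∀ t : M, t ≤ z ∧ oplus t (z ⊓ x) = z → ominus z x ≤ t := by
    intro t ⟨_, h⟩
    have h2 : ominus z (z ⊓ x) ≤ t := by
      have := ominus_oplus_le (z ⊓ x) t
      rwa [oplus_comm, h] at this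
    rwa [ominus_inf] at h2
  refine ⟨⟨⟨hle, hmem⟩, hlb⟩, fun hxz => ?_⟩
  have hzx : z ⊓ x = x := inf_eq_right.mpr hxz
  constructor
  · refine ⟨hle, ?_⟩
    have h := hmem
    rwa [hzx, oplus_comm] at h
  · intro t ⟨ht, h⟩
    exact hlb t ⟨ht, by rw [hzx, oplus_comm]; exact h⟩
end

section
/- Let (M; ∨, ∧, ⊕, ⊖, 0) be a wEMV-algebra. For all x, y, z ∈ M, z ≤ x ⊕ y if and only if z ⊖ x ≤ y. -/
universe u

open WEMV

theorem stmt2 {M : Type u} [WEMV M] (x y z : M) :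
    z ≤ oplus x y ↔ ominus z x ≤ y := by
  constructor
  · intro h
    have h1 : ominus z x = ominus z x ⊓ ominus (oplus x y) x := by
      rw [← inf_ominus, inf_eq_left.mpr h]
    calc ominus z x ≤ ominus (oplus x y) x := by rw [h1]; exact inf_le_right
      _ ≤ y := ominus_oplus_le x y
  · intro h
    have h2 : oplus x y = oplus x (ominus z x) ⊔ oplus x y := by
      rw [← oplus_sup, sup_eq_right.mpr h]
    calc z ≤ x ⊔ z := le_sup_right
      _ = oplus x (ominus z x) := (oplus_ominus x z).symm
      _ ≤ oplus x y := by rw [h2]; exact le_sup_left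
end

section
/- Let (M; ∨, ∧, ⊕, ⊖, 0) be a wEMV-algebra and let a₁, …, aₙ (n ≥ 1) be mutually different atoms of M. Then a₁ ∨ ⋯ ∨ aₙ = a₁ ⊕ ⋯ ⊕ aₙ. -/
universe u

open WEMV

lemma wemv_ominus_zero {M : Type u} [WEMV M] (y : M) : ominus y 0 = y := by
  have h := oplus_ominus (0 : M) y
  rwa [oplus_comm, oplus_zero, sup_eq_right.mpr (WEMV.zero_le y)] at h

lemma wemv_oplus_of_disj {M : Type u} [WEMV M] {a s : M} (h : a ⊓ s = 0) :
    oplus a s = a ⊔ s := by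
  have hs : ominus s a = s := by
    rw [← ominus_inf s a, inf_comm, h, wemv_ominus_zero]
  rw [← hs, oplus_ominus, hs]

lemma wemv_atom_disj {M : Type u} [WEMV M] {a b : M}
    (ha : a ≠ 0 ∧ ∀ c : M, 0 < c → c ≤ a → c = a)
    (hb : b ≠ 0 ∧ ∀ c : M, 0 < c → c ≤ b → c = b)
    (hab : a ≠ b) : a ⊓ b = 0 := by
  by_contra h
  have hpos : 0 < a ⊓ b := lt_of_le_of_ne (WEMV.zero_le _) (Ne.symm h)
  have h1 := ha.2 _ hpos inf_le_left
  have h2 := hb.2 _ hpos inf_le_right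
  exact hab (h1 ▸ h2)

lemma wemv_inf_foldr_sup {M : Type u} [WEMV M] (a : M) :
    ∀ t : List M, (∀ b ∈ t, a ⊓ b = 0) →
      a ⊓ t.foldr (fun x y => x ⊔ y) 0 = 0
  | [], _ => le_antisymm inf_le_right (WEMV.zero_le _)
  | b :: t, h => by
    simp only [List.foldr_cons]
    rw [inf_sup_left, h b (List.mem_cons_self),
      wemv_inf_foldr_sup a t (fun c hc => h c (List.mem_cons_of_mem _ hc)), sup_idem]

theorem stmt3 {M : Type u} [WEMV M] (l : List M) (hne : l ≠ [])
    (hnd : l.Nodup)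
    (hatom : ∀ x ∈ l, x ≠ 0 ∧ ∀ b : M, 0 < b → b ≤ x → b = x) :
    l.foldr (fun x y => x ⊔ y) 0 = l.foldr oplus 0 := by
  induction l with
  | nil => exact absurd rfl hne
  | cons a t ih =>
    simp only [List.foldr_cons]
    by_cases ht : t = []
    · subst ht
      simp [oplus_zero, sup_eq_left.mpr (WEMV.zero_le a)]
    · have hnd' : t.Nodup := hnd.of_cons
      have hatom' : ∀ x ∈ t, x ≠ 0 ∧ ∀ b : M, 0 < b → b ≤ x → b = x :=
        fun x hx => hatom x (List.mem_cons_of_mem _ hx)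
      rw [← ih ht hnd' hatom']
      have hdisj : ∀ b ∈ t, a ⊓ b = 0 := by
        intro b hb
        refine wemv_atom_disj (hatom a (List.mem_cons_self)) (hatom b (List.mem_cons_of_mem _ hb)) ?_
        rintro rfl
        exact (List.nodup_cons.mp hnd).1 hb
      exact (wemv_oplus_of_disj (wemv_inf_foldr_sup a t hdisj)).symm
end

section
/- Let a be an atom of a wEMV-algebra (M; ∨, ∧, ⊕, ⊖, 0) and let b ∈ M. If there is an integer n ≥ 0 such that b ≤ n.a, then b = m.a for some integer m ≥ 0. -/
universe u

open WEMV

def nmul {M : Type u} [WEMV M] : ℕ → M → M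
  | 0, _ => 0
  | n + 1, a => oplus (nmul n a) a

theorem stmt4 {M : Type u} [WEMV M] (a b : M)
    (ha0 : a ≠ 0) (hatom : ∀ c : M, 0 < c → c ≤ a → c = a)
    (hbnd : ∃ n : ℕ, b ≤ nmul n a) :
    ∃ m : ℕ, b = nmul m a := by
  obtain ⟨n, hbn⟩ := hbnd
  induction n generalizing b with
  | zero => exact ⟨0, le_antisymm hbn (WEMV.zero_le b)⟩
  | succ n ih =>
    have hzero : ∀ x : M, oplus (0:M) x = x := fun x => by
      rw [oplus_comm, oplus_zero]
    have hm0 : ∀ x : M, ominus x (0:M) = x := fun x => by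
      have h := oplus_ominus (0:M) x
      rw [hzero] at h
      rw [h, sup_eq_right.mpr (WEMV.zero_le x)]
    set c := ominus b (nmul n a) with hc
    have hmono : c ≤ ominus (nmul (n+1) a) (nmul n a) := by
      have h := inf_ominus b (nmul (n+1) a) (nmul n a)
      rw [inf_eq_left.mpr hbn] at h
      rw [hc, h]; exact inf_le_right
    have hca : c ≤ a := hmono.trans (ominus_oplus_le (nmul n a) a)
    have hcb : c ≤ b := by
      have h := ominus_sup (0:M) (nmul n a) b
      rw [sup_eq_right.mpr (WEMV.zero_le (nmul n a)), hm0 b] at h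
      rw [hc, h]; exact inf_le_left
    by_cases hc0 : c = 0
    · have hle : b ≤ nmul n a := by
        have h : oplus (nmul n a) c = nmul n a ⊔ b := oplus_ominus (nmul n a) b
        rw [hc0, oplus_zero] at h
        exact le_sup_right.trans h.symm.le
      exact ih b hle
    · have hca' : c = a := hatom c (lt_of_le_of_ne (WEMV.zero_le c) (Ne.symm hc0)) hca
      have hab : a ≤ b := by rw [← hca']; exact hcb
      have hd : ominus b a = nmul n a ⊓ b := by
        conv_lhs => rw [← hca', hc]
        rw [ominus_ominus]
      obtain ⟨m, hm⟩ := ih (nmul n a ⊓ b) inf_le_left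
      refine ⟨m + 1, ?_⟩
      have h := oplus_ominus a b
      rw [sup_eq_right.mpr hab, hd, hm] at h
      rw [← h, show nmul (m+1) a = oplus (nmul m a) a from rfl, oplus_comm]
end

section
/- Let a be an atom of a wEMV-algebra (M; ∨, ∧, ⊕, ⊖, 0) such that n.a is not idempotent for any integer n ≥ 1. Then the map n ↦ n.a from ℕ to M is injective and, for all m, n ∈ ℕ: m.a ⊕ n.a = (m+n).a, m.a ⊖ n.a = (m ∸ n).a (where ∸ is truncated subtraction on ℕ), m.a ∨ n.a = (max(m,n)).a, and m.a ∧ n.a = (min(m,n)).a; that is, {m.a : m ∈ ℕ} is a subalgebra of M isomorphic to the wEMV-algebra of the positive cone ℤ⁺. -/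
universe u

open WEMV

section Aux
variable {M : Type u} [WEMV M]

lemma wzero_oplus (x : M) : oplus 0 x = x := by rw [oplus_comm, oplus_zero]

lemma wominus_self (x : M) : ominus x x = 0 :=
  le_antisymm (by simpa [oplus_zero] using ominus_oplus_le x (0 : M)) (WEMV.zero_le _)

lemma wominus_zero (x : M) : ominus x 0 = x := by
  have h := ominus_ominus x x
  rwa [wominus_self, inf_idem] at h

lemma wzero_ominus (x : M) : ominus 0 x = 0 := by
  have h := ominus_inf (0 : M) x
  rw [inf_eq_left.mpr (WEMV.zero_le x), wominus_self] at h
  exact h.symm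

lemma woplus_le_oplus_right {x y : M} (z : M) (h : x ≤ y) : oplus z x ≤ oplus z y := by
  have := oplus_sup z x y
  rw [sup_eq_right.mpr h] at this
  rw [this]
  exact le_sup_left

lemma wle_oplus (x y : M) : x ≤ oplus x y := by
  have := woplus_le_oplus_right x (WEMV.zero_le y)
  rwa [oplus_zero] at this

lemma wominus_le_ominus_right {x y : M} (z : M) (h : x ≤ y) : ominus z y ≤ ominus z x := by
  have h2 := ominus_sup x y z
  rw [sup_eq_right.mpr h] at h2
  rw [h2]
  exact inf_le_left

lemma wominus_le_ominus_left {x y : M} (z : M) (h : x ≤ y) : ominus x z ≤ ominus y z := by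
  have h2 := inf_ominus x y z
  rw [inf_eq_left.mpr h] at h2
  rw [h2]
  exact inf_le_right

lemma wominus_eq_zero_of_le {x y : M} (h : x ≤ y) : ominus x y = 0 := by
  have h2 := ominus_inf x y
  rw [inf_eq_left.mpr h, wominus_self] at h2
  exact h2.symm

lemma nmul_one (a : M) : nmul 1 a = a := by
  show oplus (nmul 0 a) a = a
  show oplus 0 a = a
  exact wzero_oplus a

lemma nmul_le_nmul {m n : ℕ} (a : M) (h : m ≤ n) : nmul m a ≤ nmul n a := by
  induction n with
  | zero => simp at h; subst h; exact le_refl _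
  | succ n ih =>
    rcases Nat.lt_or_ge m (n+1) with h' | h'
    · exact le_trans (ih (Nat.lt_succ_iff.mp h')) (wle_oplus _ _)
    · have : m = n + 1 := le_antisymm h h'
      subst this; exact le_refl _

lemma nmul_oplus (a : M) (m n : ℕ) : oplus (nmul m a) (nmul n a) = nmul (m + n) a := by
  induction n with
  | zero => show oplus (nmul m a) 0 = nmul m a; exact oplus_zero _
  | succ n ih =>
    show oplus (nmul m a) (oplus (nmul n a) a) = oplus (nmul (m + n) a) a
    rw [← oplus_assoc, ih]

end Aux

theorem stmt5 {M : Type u} [WEMV M] (a : M)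
    (ha0 : a ≠ 0) (hatom : ∀ c : M, 0 < c → c ≤ a → c = a)
    (hnid : ∀ n : ℕ, 1 ≤ n → oplus (nmul n a) (nmul n a) ≠ nmul n a) :
    Function.Injective (fun n : ℕ => nmul n a) ∧
    (∀ m n : ℕ, oplus (nmul m a) (nmul n a) = nmul (m + n) a) ∧
    (∀ m n : ℕ, ominus (nmul m a) (nmul n a) = nmul (m - n) a) ∧
    (∀ m n : ℕ, nmul m a ⊔ nmul n a = nmul (max m n) a) ∧
    (∀ m n : ℕ, nmul m a ⊓ nmul n a = nmul (min m n) a) := by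
  -- Lemma A : nmul n a ⊕ a ≠ nmul n a
  have hA : ∀ n : ℕ, oplus (nmul n a) a ≠ nmul n a := by
    intro n hn
    cases n with
    | zero =>
      apply ha0
      have : oplus (0 : M) a = (0 : M) := hn
      rwa [wzero_oplus] at this
    | succ n =>
      have habs : ∀ k : ℕ, oplus (nmul (n+1) a) (nmul k a) = nmul (n+1) a := by
        intro k
        induction k with
        | zero => exact oplus_zero _
        | succ k ih =>
          show oplus (nmul (n+1) a) (oplus (nmul k a) a) = nmul (n+1) a
          rw [oplus_comm (nmul k a) a, ← oplus_assoc, hn, ih]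
      exact hnid (n+1) (Nat.le_add_left 1 n) (habs (n+1))
  -- injectivity
  have hsucc_ne : ∀ n : ℕ, nmul (n+1) a ≠ nmul n a := by
    intro n h; exact hA n h
  have hinj : Function.Injective (fun n : ℕ => nmul n a) := by
    intro m n h
    simp only at h
    by_contra hne
    rcases Nat.lt_or_ge m n with hlt | hge
    · have h1 : nmul (m+1) a ≤ nmul n a := nmul_le_nmul a hlt
      have h2 : nmul (m+1) a = nmul m a :=
        le_antisymm (h ▸ h1) (wle_oplus _ _)
      exact hsucc_ne m h2
    · have hlt : n < m := lt_of_le_of_ne hge (fun e => hne e.symm)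
      have h1 : nmul (n+1) a ≤ nmul m a := nmul_le_nmul a hlt
      have h2 : nmul (n+1) a = nmul n a :=
        le_antisymm (h ▸ h1) (wle_oplus _ _)
      exact hsucc_ne n h2
  -- key lemma L : (m+1).a ⊖ a = m.a
  have hL : ∀ m : ℕ, ominus (nmul (m+1) a) a = nmul m a := by
    intro m
    induction m with
    | zero => rw [nmul_one]; exact wominus_self a
    | succ m ih =>
      set d := ominus (nmul (m+2) a) a with hd
      have ha_le : a ≤ nmul (m+2) a := by
        have := nmul_le_nmul (m := 1) (n := m+2) a (by omega)
        rwa [nmul_one] at this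
      have hd1 : oplus a d = nmul (m+2) a := by
        have := oplus_ominus a (nmul (m+2) a)
        rwa [sup_eq_right.mpr ha_le] at this
      have hd2 : d ≤ nmul (m+1) a := by
        have := ominus_oplus_le a (nmul (m+1) a)
        rwa [oplus_comm a (nmul (m+1) a)] at this
      have hd3 : nmul m a ≤ d := by
        rw [← ih]
        exact wominus_le_ominus_left a (nmul_le_nmul a (by omega))
      set e := ominus d (nmul m a) with he
      have he1 : oplus (nmul m a) e = d := by
        have := oplus_ominus (nmul m a) d
        rwa [sup_eq_right.mpr hd3] at this
      have he2 : e ≤ a := by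
        have h1 : e ≤ ominus (nmul (m+1) a) (nmul m a) :=
          wominus_le_ominus_left (nmul m a) hd2
        have h2 : ominus (nmul (m+1) a) (nmul m a) ≤ a := ominus_oplus_le (nmul m a) a
        exact le_trans h1 h2
      by_cases he0 : e = 0
      · exfalso
        rw [he0, oplus_zero] at he1
        have : nmul (m+2) a = nmul (m+1) a := by
          rw [← hd1, ← he1, oplus_comm]
          rfl
        exact hA (m+1) this
      · have : e = a := hatom e (lt_of_le_of_ne (WEMV.zero_le e) (Ne.symm he0)) he2
        rw [this] at he1
        exact he1.symm ▸ rfl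
  -- ominus k a = (k-1).a
  have hL' : ∀ k : ℕ, ominus (nmul k a) a = nmul (k - 1) a := by
    intro k
    cases k with
    | zero => exact wzero_ominus a
    | succ k => simpa using hL k
  have hOminus : ∀ m n : ℕ, ominus (nmul m a) (nmul n a) = nmul (m - n) a := by
    intro m n
    induction n with
    | zero => rw [Nat.sub_zero]; exact wominus_zero _
    | succ n ih =>
      show ominus (nmul m a) (oplus (nmul n a) a) = _
      rw [ominus_oplus_assoc, ih, hL', Nat.sub_sub]
  refine ⟨hinj, nmul_oplus a, hOminus, ?_, ?_⟩
  · intro m n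
    rcases le_total m n with h | h
    · rw [sup_eq_right.mpr (nmul_le_nmul a h), Nat.max_eq_right h]
    · rw [sup_eq_left.mpr (nmul_le_nmul a h), Nat.max_eq_left h]
  · intro m n
    rcases le_total m n with h | h
    · rw [inf_eq_left.mpr (nmul_le_nmul a h), Nat.min_eq_left h]
    · rw [inf_eq_right.mpr (nmul_le_nmul a h), Nat.min_eq_right h]
end

section
/- Let (M; ∨, ∧, ⊕, ⊖, 0) be a wEMV-algebra. Then for all x, y, z ∈ M: (x ∧ y) ⊕ z = (x ⊕ z) ∧ (y ⊕ z) and z ⊖ (x ∧ y) = (z ⊖ x) ∨ (z ⊖ y). -/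
universe u

open WEMV

lemma wemv_oplus_mono_right {M : Type u} [WEMV M] (x : M) {a b : M} (h : a ≤ b) :
    oplus x a ≤ oplus x b := by
  have : oplus x b = oplus x a ⊔ oplus x b := by
    rw [← oplus_sup, sup_eq_right.mpr h]
  rw [this]; exact le_sup_left

lemma wemv_ominus_le {M : Type u} [WEMV M] (z x : M) : ominus z x ≤ z := by
  have h1 : ominus z (ominus z (ominus z x)) = ominus z x ⊓ z := ominus_ominus _ _
  have h2 : ominus z (ominus z x) = x ⊓ z := ominus_ominus _ _
  rw [h2] at h1
  have h3 : ominus z (x ⊓ z) = ominus z x := by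
    rw [inf_comm]; exact ominus_inf z x
  rw [h3] at h1
  rw [h1]; exact inf_le_right

theorem stmt6 {M : Type u} [WEMV M] (x y z : M) :
    oplus (x ⊓ y) z = oplus x z ⊓ oplus y z ∧
    ominus z (x ⊓ y) = ominus z x ⊔ ominus z y := by
  constructor
  · apply le_antisymm
    · refine le_inf ?_ ?_
      · rw [oplus_comm (x ⊓ y) z, oplus_comm x z]
        exact wemv_oplus_mono_right z inf_le_left
      · rw [oplus_comm (x ⊓ y) z, oplus_comm y z]
        exact wemv_oplus_mono_right z inf_le_right
    · set a := oplus x z ⊓ oplus y z with ha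
      have h1 : ominus a z ≤ x ⊓ y := by
        rw [ha, inf_ominus]
        refine inf_le_inf ?_ ?_
        · rw [oplus_comm x z]; exact ominus_oplus_le z x
        · rw [oplus_comm y z]; exact ominus_oplus_le z y
      have h2 : a ≤ oplus z (ominus a z) := by
        rw [oplus_ominus]; exact le_sup_right
      calc a ≤ oplus z (ominus a z) := h2
        _ ≤ oplus z (x ⊓ y) := wemv_oplus_mono_right z h1
        _ = oplus (x ⊓ y) z := oplus_comm _ _
  · have hu : z ⊓ x = ominus z (ominus z x) := ((inf_comm z x).trans (ominus_ominus x z).symm)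
    have hv : z ⊓ y = ominus z (ominus z y) := ((inf_comm z y).trans (ominus_ominus y z).symm)
    have key : ominus z (x ⊓ y) = (ominus z x ⊔ ominus z y) ⊓ z := by
      rw [← ominus_inf z (x ⊓ y)]
      have : z ⊓ (x ⊓ y) = ominus z (ominus z x ⊔ ominus z y) := by
        rw [ominus_sup, ← hu, ← hv]
        rw [inf_inf_distrib_left]
      rw [this, ominus_ominus]
    rw [key, inf_eq_left.mpr]
    exact sup_le (wemv_ominus_le z x) (wemv_ominus_le z y)
end

section
/- In each wEMV-algebra (M; ∨, ∧, ⊕, ⊖, 0) the following inequality holds for all x, y, z ∈ M: x ⊖ z ≤ (x ⊖ y) ⊕ (y ⊖ z). -/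
universe u

open WEMV

theorem stmt8 {M : Type u} [WEMV M] (x y z : M) :
    ominus x z ≤ oplus (ominus x y) (ominus y z) := by
  have key : ominus (ominus x z) (ominus x y) ≤ ominus y z := by
    have h1 : ominus (ominus x z) (ominus x y) = ominus x (oplus z (ominus x y)) := by
      rw [ominus_oplus_assoc]
    have h2 : ominus x (oplus z (ominus x y)) = ominus (ominus x (ominus x y)) z := by
      rw [oplus_comm, ominus_oplus_assoc]
    rw [h1, h2, ominus_ominus, inf_ominus]
    exact inf_le_left
  have mono : oplus (ominus x y) (ominus (ominus x z) (ominus x y)) ≤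
      oplus (ominus x y) (ominus y z) := by
    have h3 : ominus y z = ominus (ominus x z) (ominus x y) ⊔ ominus y z :=
      (sup_eq_right.mpr key).symm
    rw [h3, oplus_sup]
    exact le_sup_left
  calc ominus x z ≤ ominus x y ⊔ ominus x z := le_sup_right
    _ = oplus (ominus x y) (ominus (ominus x z) (ominus x y)) := (oplus_ominus _ _).symm
    _ ≤ _ := mono
end

section
/- Let P be a prime ideal of a wEMV-algebra (M; ∨, ∧, ⊕, ⊖, 0). Then for all x, y ∈ M, x ⊖ y ∈ P or y ⊖ x ∈ P; equivalently, the quotient M/θ_P is linearly ordered. -/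
universe u

open WEMV

theorem stmt10 {M : Type u} [WEMV M] (P : Set M)
    (hne : P.Nonempty)
    (hdown : ∀ x y : M, y ≤ x → x ∈ P → y ∈ P)
    (hplus : ∀ x ∈ P, ∀ y ∈ P, oplus x y ∈ P)
    (hprime : ∀ x y : M, x ⊓ y ∈ P → x ∈ P ∨ y ∈ P) :
    ∀ x y : M, ominus x y ∈ P ∨ ominus y x ∈ P := by
  intro x y
  obtain ⟨a, ha⟩ := hne
  have h0 : (0 : M) ∈ P := hdown a 0 (zero_le a) ha
  have hself : ∀ m : M, ominus m m = (0 : M) := by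
    intro m
    have := ominus_oplus_le m (0 : M)
    rw [oplus_zero] at this
    exact le_antisymm this (zero_le _)
  have key : ominus x y ⊓ ominus y x = (0 : M) := by
    have h1 : ominus x y = ominus x (x ⊓ y) := (ominus_inf x y).symm
    have h2 : ominus y x = ominus y (x ⊓ y) := by
      rw [inf_comm]; exact (ominus_inf y x).symm
    rw [h1, h2, ← inf_ominus, hself]
  have : ominus x y ⊓ ominus y x ∈ P := key ▸ h0
  exact hprime _ _ this
end

section
/- Let (M; ∨, ∧, ⊕, ⊖, 0) be a linearly ordered wEMV-algebra. If a ∈ M is a nonzero idempotent element, then a is the greatest element of M (i.e., M = [0, a]). Consequently, every linearly ordered wEMV-algebra is either strict or has a top element. -/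
universe u

open WEMV

lemma wemv_ominus_self {M : Type u} [WEMV M] (x : M) : ominus x x = 0 := by
  have h := ominus_oplus_le x (0 : M)
  rw [oplus_zero] at h
  exact le_antisymm h (WEMV.zero_le _)

theorem stmt11 {M : Type u} [WEMV M] (htot : ∀ x y : M, x ≤ y ∨ y ≤ x) :
    (∀ a : M, a ≠ 0 → oplus a a = a → ∀ x : M, x ≤ a) ∧
    ((∀ a : M, oplus a a = a → a = 0) ∨ ∃ t : M, ∀ x : M, x ≤ t) := by
  have main : ∀ a : M, a ≠ 0 → oplus a a = a → ∀ x : M, x ≤ a := by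
    intro a ha hid x
    rcases htot x a with h | h
    · exact h
    -- a ≤ x
    set y := ominus x a with hy
    have hya : ominus y a = y := by
      have := ominus_oplus_assoc x a a
      rw [hid] at this
      exact this.symm
    have hxy : oplus a y = x := by
      have := oplus_ominus a x
      rw [← hy] at this
      rw [this, sup_eq_right.mpr h]
    have hay : oplus a y = a ⊔ y := by
      have := oplus_ominus a y
      rw [hya] at this
      exact this
    rcases htot y a with h2 | h2
    · -- y ≤ a : x = a ⊔ y = a
      have : x = a := by rw [← hxy, hay, sup_eq_left.mpr h2]
      exact this.le
    · -- a ≤ y : then x = y, and a = x ⊖ y = 0, contradiction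
      have hxy2 : x = y := by rw [← hxy, hay, sup_eq_right.mpr h2]
      have h3 : ominus x (ominus x a) = a ⊓ x := ominus_ominus a x
      rw [← hy, ← hxy2] at h3
      rw [wemv_ominus_self] at h3
      have : a = 0 := by rw [inf_eq_left.mpr h] at h3; exact h3.symm
      exact absurd this ha
  refine ⟨main, ?_⟩
  by_cases hs : ∀ a : M, oplus a a = a → a = 0
  · exact Or.inl hs
  · push_neg at hs
    obtain ⟨a, hid, ha⟩ := hs
    exact Or.inr ⟨a, main a ha hid⟩
end

section
/- Every linearly ordered strict wEMV-algebra (M; ∨, ∧, ⊕, ⊖, 0) is cancellative; that is, if the lattice order of M is total and M has no nonzero idempotent element, then for all x, y, z ∈ M, x ⊕ z = y ⊕ z implies x = y. -/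
universe u

open WEMV

theorem stmt13 {M : Type u} [WEMV M]
    (htot : ∀ x y : M, x ≤ y ∨ y ≤ x)
    (hstrict : ∀ a : M, oplus a a = a → a = 0) :
    ∀ x y z : M, oplus x z = oplus y z → x = y := by
  have hself : ∀ a : M, ominus a a = 0 := by
    intro a
    have h1 : ominus (oplus a 0) a ≤ 0 := ominus_oplus_le a 0
    rw [oplus_zero] at h1
    exact le_antisymm h1 (zero_le _)
  have key : ∀ u t : M, oplus u t = u → t = 0 := by
    intro u t hu
    set p := ominus (oplus u u) u with hpdef
    have hp : ominus p t = p := by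
      calc ominus p t = ominus (oplus u u) (oplus u t) :=
            (ominus_oplus_assoc (oplus u u) u t).symm
        _ = p := by rw [hu]
    have hinf : t ⊓ p = (0 : M) := by
      have h6 := ominus_ominus t p
      rw [hp, hself] at h6
      exact h6.symm
    rcases htot t p with h | h
    · calc t = t ⊓ p := (inf_eq_left.mpr h).symm
        _ = 0 := hinf
    · have hp0 : p = 0 := by
        calc p = t ⊓ p := (inf_eq_right.mpr h).symm
          _ = 0 := hinf
      have hle : oplus u u ≤ u := by
        have h4 := oplus_ominus u (oplus u u)
        rw [← hpdef, hp0, oplus_zero] at h4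
        exact sup_eq_left.mp h4.symm
      have hge : u ≤ oplus u u := by
        have h5 := oplus_sup u 0 u
        rw [oplus_zero, sup_eq_right.mpr (zero_le u)] at h5
        rw [h5]
        exact le_sup_left
      have hu0 : u = 0 := hstrict u (le_antisymm hle hge)
      calc t = oplus 0 t := by rw [oplus_comm, oplus_zero]
        _ = oplus u t := by rw [hu0]
        _ = u := hu
        _ = 0 := hu0
  intro x y z h
  have main : ∀ a b : M, a ≤ b → oplus a z = oplus b z → a = b := by
    intro a b hab hz
    have hb : oplus a (ominus b a) = b := by
      rw [oplus_ominus, sup_eq_right.mpr hab]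
    have habs : oplus (oplus a z) (ominus b a) = oplus a z := by
      calc oplus (oplus a z) (ominus b a)
          = oplus (oplus a (ominus b a)) z := by
            rw [oplus_assoc, oplus_assoc, oplus_comm z (ominus b a)]
        _ = oplus b z := by rw [hb]
        _ = oplus a z := hz.symm
    have ht0 := key _ _ habs
    rw [ht0, oplus_zero] at hb
    exact hb
  rcases htot x y with h1 | h1
  · exact main x y h1 h
  · exact (main y x h1 h.symm).symm
end

section
/- A wEMV-algebra (M; ∨, ∧, ⊕, ⊖, 0) is cancellative if and only if it satisfies the identity (x ⊕ y) ⊖ x = y for all x, y ∈ M. -/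
universe u

open WEMV

theorem stmt14 {M : Type u} [WEMV M] :
    (∀ x y z : M, oplus x z = oplus y z → x = y) ↔
    (∀ x y : M, ominus (oplus x y) x = y) := by
  constructor
  · intro hc x y
    have hx_le : x ≤ oplus x y := by
      have := oplus_sup x 0 y
      rw [sup_eq_right.mpr (zero_le y), oplus_zero] at this
      exact le_sup_left.trans this.ge
    have h1 : oplus x (ominus (oplus x y) x) = oplus x y := by
      rw [oplus_ominus, sup_eq_right.mpr hx_le]
    have h2 : oplus x y = oplus y x := oplus_comm x y
    refine hc _ _ x ?_
    rw [oplus_comm (ominus (oplus x y) x) x, h1, h2]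
  · intro h x y z heq
    have hx : ominus (oplus x z) z = x := by rw [oplus_comm x z]; exact h z x
    have hy : ominus (oplus y z) z = y := by rw [oplus_comm y z]; exact h z y
    rw [← hx, ← hy, heq]
end

section
/- Every wEMV-algebra (M; ∨, ∧, ⊕, ⊖, 0) can be embedded into a wEMV-algebra with a top element; that is, there exist a wEMV-algebra (N; ∨, ∧, ⊕, ⊖, 0) having a greatest element and an injective map f : M → N satisfying f(0) = 0 and f(x * y) = f(x) * f(y) for every * ∈ {∨, ∧, ⊕, ⊖} and all x, y ∈ M. -/
universe u

open WEMV

def IsWEMVEmbedding {M : Type u} [WEMV M] {N : Type u} [WEMV N] (f : M → N) : Prop :=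
  Function.Injective f ∧ f 0 = 0 ∧
  (∀ x y : M, f (x ⊔ y) = f x ⊔ f y) ∧
  (∀ x y : M, f (x ⊓ y) = f x ⊓ f y) ∧
  (∀ x y : M, f (oplus x y) = oplus (f x) (f y)) ∧
  (∀ x y : M, f (ominus x y) = ominus (f x) (f y))

def HasTop (N : Type u) [WEMV N] : Prop := ∃ t : N, ∀ y : N, y ≤ t

namespace WEMV

variable {M : Type u} [WEMV M]

lemma zero_oplus (x : M) : oplus 0 x = x := by rw [oplus_comm, oplus_zero]

lemma zero_sup' (x : M) : (0:M) ⊔ x = x := sup_eq_right.2 (zero_le x)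

lemma osub_zero (x : M) : ominus x 0 = x := by
  have h := oplus_ominus (0:M) x
  rwa [zero_oplus, zero_sup'] at h

lemma osub_self (x : M) : ominus x x = 0 := by
  have h := ominus_ominus (0:M) x
  rwa [osub_zero, inf_eq_left.2 (zero_le x)] at h

lemma zero_osub (x : M) : ominus 0 x = 0 := by
  have h := ominus_inf (0:M) x
  rw [inf_eq_left.2 (zero_le x), osub_self] at h
  exact h.symm

lemma oplus_le_oplus_right {b c : M} (h : b ≤ c) (a : M) :
    oplus a b ≤ oplus a c := by
  have h2 := oplus_sup a b c
  rw [sup_eq_right.2 h] at h2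
  exact sup_eq_right.1 h2.symm

lemma oplus_le_oplus_left {a b : M} (h : a ≤ b) (c : M) :
    oplus a c ≤ oplus b c := by
  rw [oplus_comm a c, oplus_comm b c]; exact oplus_le_oplus_right h c

lemma le_oplus_self (a b : M) : a ≤ oplus a b := by
  have := oplus_le_oplus_right (zero_le b) a
  rwa [oplus_zero] at this

lemma le_oplus_self' (a b : M) : b ≤ oplus a b := by
  rw [oplus_comm]; exact le_oplus_self b a

lemma osub_le_osub_left {a b : M} (h : a ≤ b) (c : M) :
    ominus a c ≤ ominus b c := by
  have h2 := inf_ominus a b c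
  rw [inf_eq_left.2 h] at h2
  exact h2.le.trans inf_le_right

lemma osub_le_osub_right {a b : M} (h : a ≤ b) (c : M) :
    ominus c b ≤ ominus c a := by
  have h2 := ominus_sup a b c
  rw [sup_eq_right.2 h] at h2
  exact h2.le.trans inf_le_left

lemma osub_le_self (a b : M) : ominus a b ≤ a :=
  (osub_le_osub_right (zero_le b) a).trans_eq (osub_zero a)

lemma osub_eq_zero {a b : M} (h : a ≤ b) : ominus a b = 0 := by
  have h2 := ominus_inf a b
  rw [inf_eq_left.2 h, osub_self] at h2
  exact h2.symm

lemma le_of_osub_eq_zero {a b : M} (h : ominus a b = 0) : a ≤ b := by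
  have h2 := oplus_ominus b a
  rw [h, oplus_zero] at h2
  exact sup_eq_left.1 h2.symm

lemma osub_eq_zero_iff {a b : M} : ominus a b = 0 ↔ a ≤ b :=
  ⟨le_of_osub_eq_zero, osub_eq_zero⟩

lemma oplus_osub_of_le {a b : M} (h : a ≤ b) : oplus a (ominus b a) = b := by
  rw [oplus_ominus, sup_eq_right.2 h]

lemma le_oplus_osub (x y : M) : x ≤ oplus y (ominus x y) := by
  rw [oplus_ominus]; exact le_sup_right

lemma ominus_oplus_le' (x y : M) : ominus (oplus x y) y ≤ x := by
  rw [oplus_comm]; exact ominus_oplus_le y x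

lemma oplus_inf (x y z : M) : oplus x (y ⊓ z) = oplus x y ⊓ oplus x z := by
  refine le_antisymm (le_inf (oplus_le_oplus_right inf_le_left x)
    (oplus_le_oplus_right inf_le_right x)) ?_
  set t := oplus x y ⊓ oplus x z with ht
  have h1 : ominus t x ≤ y ⊓ z :=
    le_inf ((osub_le_osub_left inf_le_left x).trans (ominus_oplus_le x y))
      ((osub_le_osub_left inf_le_right x).trans (ominus_oplus_le x z))
  calc t ≤ x ⊔ t := le_sup_right
    _ = oplus x (ominus t x) := (oplus_ominus x t).symm
    _ ≤ oplus x (y ⊓ z) := oplus_le_oplus_right h1 x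

lemma sup_osub (x z w : M) : ominus (x ⊔ z) w = ominus x w ⊔ ominus z w := by
  refine le_antisymm ?_ (sup_le (osub_le_osub_left le_sup_left w)
    (osub_le_osub_left le_sup_right w))
  refine le_of_osub_eq_zero ?_
  have h1 : ominus (ominus (x ⊔ z) w) (ominus x w) = ominus (x ⊔ z) (w ⊔ x) := by
    rw [← ominus_oplus_assoc, oplus_ominus]
  have h2 : ominus (ominus (x ⊔ z) w) (ominus z w) = ominus (x ⊔ z) (w ⊔ z) := by
    rw [← ominus_oplus_assoc, oplus_ominus]
  rw [ominus_sup, h1, h2, ← ominus_sup]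
  refine osub_eq_zero ?_
  calc x ⊔ z ≤ w ⊔ (x ⊔ z) := le_sup_right
    _ = w ⊔ x ⊔ (w ⊔ z) := by rw [sup_sup_distrib_left]

lemma osub_inf_osub (a b : M) : ominus a b ⊓ ominus b a = 0 := by
  refine le_antisymm ?_ (zero_le _)
  calc ominus a b ⊓ ominus b a
      ≤ ominus (a ⊔ b) b ⊓ ominus (a ⊔ b) a :=
        inf_le_inf (osub_le_osub_left le_sup_left b) (osub_le_osub_left le_sup_right a)
    _ = ominus (a ⊔ b) (b ⊔ a) := (ominus_sup b a (a ⊔ b)).symm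
    _ = 0 := osub_eq_zero (sup_comm a b).le

lemma osub_oplus_osub_le (x y z : M) :
    ominus (oplus x z) (oplus y z) ≤ ominus x y := by
  rw [oplus_comm y z, ominus_oplus_assoc]
  exact osub_le_osub_left (ominus_oplus_le' x z) y

lemma osub_le_oplus_osub (a b c : M) :
    ominus (oplus a b) c ≤ oplus (ominus a c) b := by
  have h : ominus (ominus (oplus a b) c) b ≤ ominus a c := by
    rw [← ominus_oplus_assoc]
    exact osub_oplus_osub_le a c b
  calc ominus (oplus a b) c ≤ b ⊔ ominus (oplus a b) c := le_sup_right
    _ = oplus b (ominus (ominus (oplus a b) c) b) := (oplus_ominus _ _).symm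
    _ ≤ oplus b (ominus a c) := oplus_le_oplus_right h b
    _ = oplus (ominus a c) b := oplus_comm _ _

lemma osub_triangle (x y z : M) :
    ominus x z ≤ oplus (ominus y z) (ominus x y) := by
  calc ominus x z ≤ ominus (oplus y (ominus x y)) z :=
        osub_le_osub_left (le_oplus_osub x y) z
    _ ≤ oplus (ominus y z) (ominus x y) := osub_le_oplus_osub y (ominus x y) z

lemma osub_osub_osub_le (x y z : M) :
    ominus (ominus x z) (ominus y z) ≤ ominus x y := by
  have h := osub_le_osub_left (osub_triangle x y z) (ominus y z)
  refine h.trans ?_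
  exact ominus_oplus_le (ominus y z) (ominus x y)

lemma osub_osub_osub_le' (x y z : M) :
    ominus (ominus z x) (ominus z y) ≤ ominus y x := by
  have hy : oplus (x ⊓ y) (ominus y x) = y := by
    have h := oplus_ominus (x ⊓ y) y
    rw [inf_comm x y, ominus_inf] at h
    rw [inf_comm y x] at h
    rw [h]
    exact sup_eq_right.2 inf_le_right
  have h2 : ominus z y = ominus (ominus z (x ⊓ y)) (ominus y x) := by
    rw [← ominus_oplus_assoc, hy]
  have h3 : ominus z x ≤ oplus (ominus z y) (ominus y x) := by
    calc ominus z x ≤ ominus z (x ⊓ y) := osub_le_osub_right inf_le_left z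
      _ ≤ (ominus y x) ⊔ ominus z (x ⊓ y) := le_sup_right
      _ = oplus (ominus y x) (ominus (ominus z (x ⊓ y)) (ominus y x)) :=
          (oplus_ominus _ _).symm
      _ = oplus (ominus y x) (ominus z y) := by rw [← h2]
      _ = oplus (ominus z y) (ominus y x) := oplus_comm _ _
  calc ominus (ominus z x) (ominus z y)
      ≤ ominus (oplus (ominus z y) (ominus y x)) (ominus z y) :=
        osub_le_osub_left h3 _
    _ ≤ ominus y x := ominus_oplus_le _ _

lemma sup_osub_sup_le (x y z : M) : ominus (x ⊔ z) (y ⊔ z) ≤ ominus x y := by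
  rw [sup_osub]
  refine sup_le ((osub_le_osub_right le_sup_left x)) ?_
  rw [osub_eq_zero (le_sup_right : z ≤ y ⊔ z)]
  exact zero_le _

lemma inf_osub_inf_le (x y z : M) : ominus (x ⊓ z) (y ⊓ z) ≤ ominus x y := by
  set u := ominus (x ⊓ z) (y ⊓ z) with hu
  have h1 : u ≤ ominus x (y ⊓ z) := osub_le_osub_left inf_le_left _
  have h2 : u ≤ ominus z y := by
    have ha : ominus z (y ⊓ z) = ominus z y := by rw [inf_comm y z, ominus_inf]
    exact (osub_le_osub_left (inf_le_right : x ⊓ z ≤ z) (y ⊓ z)).trans ha.le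
  have h3 : ominus u (ominus x y) ≤ ominus y z := by
    have h4 : ominus (ominus x (y ⊓ z)) (ominus x y) ≤ ominus y (y ⊓ z) :=
      osub_osub_osub_le' (y ⊓ z) y x
    rw [ominus_inf] at h4
    exact (osub_le_osub_left h1 (ominus x y)).trans h4
  have h5 : ominus u (ominus x y) ≤ ominus z y := (osub_le_self _ _).trans h2
  have h6 : ominus u (ominus x y) = 0 := by
    refine le_antisymm ?_ (zero_le _)
    have := le_inf h3 h5
    rwa [osub_inf_osub y z] at this
  exact le_of_osub_eq_zero h6

lemma inf_oplus_of_disj {a b : M} (h : a ⊓ b = 0) (c : M) :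
    a ⊓ oplus b c = a ⊓ c := by
  refine le_antisymm ?_ (inf_le_inf_left a (le_oplus_self' b c))
  set s := a ⊓ oplus b c with hs
  have h1 : ominus s c ≤ a := (osub_le_self s c).trans inf_le_left
  have h2 : ominus s c ≤ b := by
    have h3 : ominus s c ≤ ominus (oplus b c) c := osub_le_osub_left inf_le_right c
    exact h3.trans (ominus_oplus_le' b c)
  have h4 : ominus s c = 0 := le_antisymm (by rw [← h]; exact le_inf h1 h2) (zero_le _)
  exact le_inf inf_le_left (le_of_osub_eq_zero h4)

lemma key_lemma (x y z : M) (hz : oplus x y ≤ z) :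
    ominus z x ⊓ y ≤ ominus (oplus x y) x := by
  set t := oplus x y with htdef
  set r := ominus t x with hrdef
  set d := ominus z t with hddef
  set w := ominus z x with hwdef
  set v := ominus z y with hvdef
  have ht : oplus x r = t := oplus_osub_of_le (le_oplus_self x y)
  have hwr : ominus w r = d := by rw [hwdef, hrdef, ← ominus_oplus_assoc, ht]
  have hrw : r ≤ w := osub_le_osub_left hz x
  have hw : w = oplus r d := by
    rw [← hwr, oplus_ominus, sup_eq_right.2 hrw]
  have hv : ominus v x = d := by
    rw [hvdef, ← ominus_oplus_assoc, oplus_comm, ← htdef]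
  have h5 : x ⊔ v = oplus x d := by rw [← hv, oplus_ominus]
  have h6 : ominus z (x ⊔ v) = w ⊓ y := by
    rw [ominus_sup, hvdef, ominus_ominus, inf_eq_left.2 ((le_oplus_self' x y).trans hz)]
  have h7 : ominus z (x ⊔ v) ≤ r := by
    rw [h5, ominus_oplus_assoc, ← hwdef, hw, oplus_comm r d]
    exact ominus_oplus_le d r
  rw [← h6]
  exact h7

end WEMV

namespace WEMV

variable {M : Type u} [WEMV M]

lemma linear_canc_or_top (lin : ∀ a b : M, a ≤ b ∨ b ≤ a) (x y : M) :
    ominus (oplus x y) x = y ∨ ∀ z : M, z ≤ oplus x y := by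
  set t := oplus x y with htdef
  set r := ominus t x with hrdef
  by_cases hyr : y ≤ r
  · exact Or.inl (le_antisymm (ominus_oplus_le x y) hyr)
  right
  intro z
  set z' := z ⊔ t with hz'def
  have hz : t ≤ z' := le_sup_right
  have hxz : x ≤ z' := (le_oplus_self x y).trans hz
  have hk : ominus z' x ⊓ y ≤ r := key_lemma x y z' hz
  set w := ominus z' x with hwdef
  rcases lin w y with hwy | hyw
  · have hw : w ≤ r := by rwa [inf_eq_left.2 hwy] at hk
    have hz1 : z' = oplus x w := by
      rw [hwdef, oplus_ominus, sup_eq_right.2 hxz]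
    have hz2 : z' ≤ t := by
      rw [hz1]
      calc oplus x w ≤ oplus x r := oplus_le_oplus_right hw x
        _ = x ⊔ t := oplus_ominus x t
        _ = t := sup_eq_right.2 (le_oplus_self x y)
    exact le_sup_left.trans hz2
  · exact absurd (by rwa [inf_eq_right.2 hyw] at hk) hyr

end WEMV

section ChangSec

variable (C : Type u) [WEMV C]

inductive Chang : Type u
  | lo : C → Chang
  | hi : C → Chang

namespace Chang

variable {C}

instance : Max (Chang C) :=
  ⟨fun x y => match x, y with
    | lo a, lo b => lo (a ⊔ b)
    | lo _, hi x => hi x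
    | hi x, lo _ => hi x
    | hi x, hi y => hi (x ⊓ y)⟩

instance : Min (Chang C) :=
  ⟨fun x y => match x, y with
    | lo a, lo b => lo (a ⊓ b)
    | lo a, hi _ => lo a
    | hi _, lo a => lo a
    | hi x, hi y => hi (x ⊔ y)⟩

instance : Zero (Chang C) := ⟨lo 0⟩

def changLattice : Lattice (Chang C) :=
  Lattice.mk'
    (fun x y => by
      cases x <;> cases y <;>
        first
          | rfl
          | exact congrArg lo (sup_comm _ _)
          | exact congrArg hi (inf_comm _ _))
    (fun x y z => by
      cases x <;> cases y <;> cases z <;>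
        first
          | rfl
          | exact congrArg lo (sup_assoc _ _ _)
          | exact congrArg hi (inf_assoc _ _ _))
    (fun x y => by
      cases x <;> cases y <;>
        first
          | rfl
          | exact congrArg lo (inf_comm _ _)
          | exact congrArg hi (sup_comm _ _))
    (fun x y z => by
      cases x <;> cases y <;> cases z <;>
        first
          | rfl
          | exact congrArg lo (inf_assoc _ _ _)
          | exact congrArg hi (sup_assoc _ _ _))
    (fun x y => by
      cases x <;> cases y <;>
        first
          | rfl
          | exact congrArg lo sup_inf_self
          | exact congrArg lo (sup_idem _)
          | exact congrArg hi inf_sup_self)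
    (fun x y => by
      cases x <;> cases y <;>
        first
          | rfl
          | exact congrArg lo inf_sup_self
          | exact congrArg hi (sup_idem _)
          | exact congrArg hi sup_inf_self)

instance : DistribLattice (Chang C) :=
  letI : Lattice (Chang C) := changLattice
  { changLattice with
    le_sup_inf := fun x y z => by
      cases x with
      | lo a =>
        cases y with
        | lo b =>
          cases z with
          | lo c => exact le_of_eq (congrArg lo (sup_inf_left a b c).symm)
          | hi c => exact le_refl _
        | hi b =>
          cases z with
          | lo c => exact le_refl _
          | hi c => exact le_refl _
      | hi a =>
        cases y with
        | lo b =>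
          cases z with
          | lo c => exact le_of_eq (congrArg hi (sup_idem a))
          | hi c => exact le_of_eq (congrArg hi sup_inf_self)
        | hi b =>
          cases z with
          | lo c => exact le_of_eq (congrArg hi (by rw [sup_comm, sup_inf_self]))
          | hi c => exact le_of_eq (congrArg hi (inf_sup_left a b c)).symm }

@[simp] lemma lo_sup_lo (a b : C) : (lo a : Chang C) ⊔ lo b = lo (a ⊔ b) := rfl
@[simp] lemma lo_sup_hi (a b : C) : (lo a : Chang C) ⊔ hi b = hi b := rfl
@[simp] lemma hi_sup_lo (a b : C) : (hi a : Chang C) ⊔ lo b = hi a := rfl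
@[simp] lemma hi_sup_hi (a b : C) : (hi a : Chang C) ⊔ hi b = hi (a ⊓ b) := rfl
@[simp] lemma lo_inf_lo (a b : C) : (lo a : Chang C) ⊓ lo b = lo (a ⊓ b) := rfl
@[simp] lemma lo_inf_hi (a b : C) : (lo a : Chang C) ⊓ hi b = lo a := rfl
@[simp] lemma hi_inf_lo (a b : C) : (hi a : Chang C) ⊓ lo b = lo b := rfl
@[simp] lemma hi_inf_hi (a b : C) : (hi a : Chang C) ⊓ hi b = hi (a ⊔ b) := rfl

lemma lo_le_lo_iff {a b : C} : (lo a : Chang C) ≤ lo b ↔ a ≤ b := by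
  rw [← sup_eq_right (a := (lo a : Chang C))]
  show lo (a ⊔ b) = lo b ↔ a ≤ b
  constructor
  · intro h
    exact sup_eq_right.1 (Chang.lo.inj h)
  · intro h
    rw [sup_eq_right.2 h]

lemma lo_le_hi (a b : C) : (lo a : Chang C) ≤ hi b := sup_eq_right.1 rfl

lemma hi_le_hi_iff {a b : C} : (hi a : Chang C) ≤ hi b ↔ b ≤ a := by
  rw [← sup_eq_right (a := (hi a : Chang C))]
  show hi (a ⊓ b) = hi b ↔ b ≤ a
  constructor
  · intro h
    exact inf_eq_right.1 (Chang.hi.inj h)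
  · intro h
    rw [inf_eq_right.2 h]

def padd : Chang C → Chang C → Chang C
  | lo a, lo b => lo (WEMV.oplus a b)
  | lo a, hi x => hi (WEMV.ominus x a)
  | hi x, lo a => hi (WEMV.ominus x a)
  | hi _, hi _ => hi 0

def psub : Chang C → Chang C → Chang C
  | lo a, lo b => lo (WEMV.ominus a b)
  | lo _, hi _ => lo 0
  | hi x, lo a => hi (WEMV.oplus x a)
  | hi x, hi y => lo (WEMV.ominus y x)

open WEMV in
def instWEMV (canc : ∀ a b : C, ominus (oplus a b) a = b) : WEMV (Chang C) where
  oplus := padd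
  ominus := psub
  zero_le x := by
    cases x with
    | lo a => exact lo_le_lo_iff.2 (WEMV.zero_le a)
    | hi a => exact lo_le_hi 0 a
  oplus_comm x y := by
    cases x <;> cases y <;>
      first
        | rfl
        | exact congrArg lo (oplus_comm _ _)
  oplus_assoc x y z := by
    cases x with
    | lo a =>
      cases y with
      | lo b =>
        cases z with
        | lo c => exact congrArg lo (oplus_assoc a b c)
        | hi c => exact congrArg hi (by rw [oplus_comm a b, ominus_oplus_assoc])
      | hi b =>
        cases z with
        | lo c => exact congrArg hi (by rw [← ominus_oplus_assoc, ← ominus_oplus_assoc, oplus_comm a c])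
        | hi c => exact congrArg hi (zero_osub a).symm
    | hi a =>
      cases y with
      | lo b =>
        cases z with
        | lo c => exact congrArg hi (ominus_oplus_assoc a b c).symm
        | hi c => rfl
      | hi b =>
        cases z with
        | lo c => exact congrArg hi (zero_osub c)
        | hi c => rfl
  oplus_zero x := by
    cases x with
    | lo a => exact congrArg lo (oplus_zero a)
    | hi a => exact congrArg hi (osub_zero a)
  ominus_oplus_le x y := by
    cases x with
    | lo a =>
      cases y with
      | lo b => exact lo_le_lo_iff.2 (ominus_oplus_le a b)
      | hi b => exact hi_le_hi_iff.2 ((le_oplus_osub b a).trans_eq (oplus_comm _ _))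
    | hi a =>
      cases y with
      | lo b =>
        refine lo_le_lo_iff.2 ?_
        rw [ominus_ominus]
        exact inf_le_left
      | hi b =>
        show (lo (ominus a 0) : Chang C) ≤ hi b
        rw [osub_zero]
        exact lo_le_hi a b
  oplus_ominus x y := by
    cases x with
    | lo a =>
      cases y with
      | lo b => exact congrArg lo (oplus_ominus a b)
      | hi b => exact congrArg hi (by rw [oplus_comm b a, canc a b])
    | hi a =>
      cases y with
      | lo b => exact congrArg hi (osub_zero a)
      | hi b => exact congrArg hi (by rw [ominus_ominus, inf_comm])
  ominus_inf x y := by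
    cases x with
    | lo a =>
      cases y with
      | lo b => exact congrArg lo (ominus_inf a b)
      | hi b => exact congrArg lo (osub_self a)
    | hi a =>
      cases y with
      | lo b => rfl
      | hi b => exact congrArg lo (by rw [← oplus_ominus a b, canc])
  ominus_ominus x z := by
    cases x with
    | lo a =>
      cases z with
      | lo c => exact congrArg lo (ominus_ominus a c)
      | hi c => exact congrArg lo (canc c a)
    | hi a =>
      cases z with
      | lo c => exact congrArg lo (osub_zero c)
      | hi c => exact congrArg hi (by rw [oplus_ominus, sup_comm])
  ominus_sup x y z := by
    cases x with
    | lo a =>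
      cases y with
      | lo b =>
        cases z with
        | lo c => exact congrArg lo (ominus_sup a b c)
        | hi c => exact congrArg hi (oplus_sup c a b)
      | hi b =>
        cases z with
        | lo c => exact congrArg lo (inf_eq_right.2 (WEMV.zero_le _)).symm
        | hi c => rfl
    | hi a =>
      cases y with
      | lo b =>
        cases z with
        | lo c => exact congrArg lo (inf_eq_left.2 (WEMV.zero_le _)).symm
        | hi c => rfl
      | hi b =>
        cases z with
        | lo c => exact congrArg lo (inf_idem _).symm
        | hi c => exact congrArg lo (inf_ominus a b c)
  inf_ominus x y z := by
    cases x with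
    | lo a =>
      cases y with
      | lo b =>
        cases z with
        | lo c => exact congrArg lo (inf_ominus a b c)
        | hi c => exact congrArg lo (inf_idem _).symm
      | hi b =>
        cases z with
        | lo c => rfl
        | hi c => exact congrArg lo (inf_eq_left.2 (WEMV.zero_le _)).symm
    | hi a =>
      cases y with
      | lo b =>
        cases z with
        | lo c => rfl
        | hi c => exact congrArg lo (inf_eq_right.2 (WEMV.zero_le _)).symm
      | hi b =>
        cases z with
        | lo c => exact congrArg hi (by rw [oplus_comm _ c, oplus_sup, oplus_comm c a, oplus_comm c b])
        | hi c => exact congrArg lo (ominus_sup a b c)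
  ominus_oplus_assoc x y z := by
    cases x with
    | lo a =>
      cases y with
      | lo b =>
        cases z with
        | lo c => exact congrArg lo (ominus_oplus_assoc a b c)
        | hi c => rfl
      | hi b =>
        cases z with
        | lo c => exact congrArg lo (zero_osub c).symm
        | hi c => rfl
    | hi a =>
      cases y with
      | lo b =>
        cases z with
        | lo c => exact congrArg hi (oplus_assoc a b c).symm
        | hi c => exact congrArg lo (by rw [← ominus_oplus_assoc, oplus_comm b a])
      | hi b =>
        cases z with
        | lo c => exact congrArg lo (by rw [← ominus_oplus_assoc, ← ominus_oplus_assoc, oplus_comm a c])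
        | hi c => exact congrArg lo (zero_osub a)
  oplus_sup x y z := by
    cases x with
    | lo a =>
      cases y with
      | lo b =>
        cases z with
        | lo c => exact congrArg lo (oplus_sup a b c)
        | hi c => rfl
      | hi b =>
        cases z with
        | lo c => rfl
        | hi c => exact congrArg hi (inf_ominus b c a)
    | hi a =>
      cases y with
      | lo b =>
        cases z with
        | lo c => exact congrArg hi (ominus_sup b c a)
        | hi c => exact congrArg hi (inf_eq_right.2 (WEMV.zero_le _)).symm
      | hi b =>
        cases z with
        | lo c => exact congrArg hi (inf_eq_left.2 (WEMV.zero_le _)).symm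
        | hi c => exact congrArg hi (inf_idem _).symm

end Chang

end ChangSec

open WEMV in
lemma chain_embed (C : Type u) [WEMV C] (lin : ∀ a b : C, a ≤ b ∨ b ≤ a) :
    ∃ (N : Type u) (instN : WEMV N) (f : C → N),
      @HasTop N instN ∧ @IsWEMVEmbedding C _ N instN f := by
  by_cases htop : HasTop C
  · exact ⟨C, inferInstance, id, htop, Function.injective_id, rfl,
      fun _ _ => rfl, fun _ _ => rfl, fun _ _ => rfl, fun _ _ => rfl⟩
  · have canc : ∀ a b : C, ominus (oplus a b) a = b := by
      intro a b
      rcases linear_canc_or_top lin a b with h | h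
      · exact h
      · exact absurd ⟨oplus a b, h⟩ htop
    refine ⟨Chang C, Chang.instWEMV canc, Chang.lo, ⟨Chang.hi 0, ?_⟩, ?_, rfl,
      fun _ _ => rfl, fun _ _ => rfl, fun _ _ => rfl, fun _ _ => rfl⟩
    · intro y
      cases y with
      | lo a => exact Chang.lo_le_hi a 0
      | hi a => exact Chang.hi_le_hi_iff.2 (WEMV.zero_le a)
    · intro a b h
      exact Chang.lo.inj h

namespace WEMV

variable {M : Type u} [WEMV M]

/-! ### Prime ideals and quotients -/

structure PrimeIdeal (M : Type u) [WEMV M] : Type u where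
  carrier : Set M
  zero_mem : (0 : M) ∈ carrier
  down : ∀ {x y : M}, x ≤ y → y ∈ carrier → x ∈ carrier
  add : ∀ {x y : M}, x ∈ carrier → y ∈ carrier → oplus x y ∈ carrier
  prime : ∀ x y : M, ominus x y ∈ carrier ∨ ominus y x ∈ carrier

namespace PrimeIdeal

variable (P : PrimeIdeal M)

def rel (x y : M) : Prop := ominus x y ∈ P.carrier ∧ ominus y x ∈ P.carrier

lemma rel_refl (x : M) : P.rel x x := by
  constructor <;> (rw [osub_self]; exact P.zero_mem)

lemma rel_symm {x y : M} (h : P.rel x y) : P.rel y x := ⟨h.2, h.1⟩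

lemma rel_trans {x y z : M} (h1 : P.rel x y) (h2 : P.rel y z) : P.rel x z := by
  constructor
  · exact P.down (osub_triangle x y z) (P.add h2.1 h1.1)
  · exact P.down (osub_triangle z y x) (P.add h1.2 h2.2)

def setoid : Setoid M := ⟨P.rel, fun x => P.rel_refl x, P.rel_symm, P.rel_trans⟩

lemma rel_oplus {x y x' y' : M} (h1 : P.rel x x') (h2 : P.rel y y') :
    P.rel (oplus x y) (oplus x' y') := by
  refine P.rel_trans (y := oplus x' y) ?_ ?_
  · exact ⟨P.down (osub_oplus_osub_le x x' y) h1.1,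
      P.down (osub_oplus_osub_le x' x y) h1.2⟩
  · have e1 : oplus x' y = oplus y x' := oplus_comm _ _
    have e2 : oplus x' y' = oplus y' x' := oplus_comm _ _
    rw [e1, e2]
    exact ⟨P.down (osub_oplus_osub_le y y' x') h2.1,
      P.down (osub_oplus_osub_le y' y x') h2.2⟩

lemma rel_ominus {x y x' y' : M} (h1 : P.rel x x') (h2 : P.rel y y') :
    P.rel (ominus x y) (ominus x' y') := by
  refine P.rel_trans (y := ominus x' y) ?_ ?_
  · exact ⟨P.down (osub_osub_osub_le x x' y) h1.1,
      P.down (osub_osub_osub_le x' x y) h1.2⟩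
  · exact ⟨P.down (osub_osub_osub_le' y y' x') h2.2,
      P.down (osub_osub_osub_le' y' y x') h2.1⟩

lemma rel_sup {x y x' y' : M} (h1 : P.rel x x') (h2 : P.rel y y') :
    P.rel (x ⊔ y) (x' ⊔ y') := by
  refine P.rel_trans (y := x' ⊔ y) ?_ ?_
  · exact ⟨P.down (sup_osub_sup_le x x' y) h1.1,
      P.down (sup_osub_sup_le x' x y) h1.2⟩
  · rw [sup_comm x' y, sup_comm x' y']
    exact ⟨P.down (sup_osub_sup_le y y' x') h2.1,
      P.down (sup_osub_sup_le y' y x') h2.2⟩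

lemma rel_inf {x y x' y' : M} (h1 : P.rel x x') (h2 : P.rel y y') :
    P.rel (x ⊓ y) (x' ⊓ y') := by
  refine P.rel_trans (y := x' ⊓ y) ?_ ?_
  · exact ⟨P.down (inf_osub_inf_le x x' y) h1.1,
      P.down (inf_osub_inf_le x' x y) h1.2⟩
  · rw [inf_comm x' y, inf_comm x' y']
    exact ⟨P.down (inf_osub_inf_le y y' x') h2.1,
      P.down (inf_osub_inf_le y' y x') h2.2⟩

end PrimeIdeal

def QuotM (P : PrimeIdeal M) : Type u := Quotient P.setoid

namespace QuotM

variable {P : PrimeIdeal M}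

def mk (x : M) : QuotM P := Quotient.mk P.setoid x

lemma mk_eq_mk_iff {x y : M} : (mk x : QuotM P) = mk y ↔ P.rel x y := by
  constructor
  · exact Quotient.exact
  · intro h
    exact Quotient.sound h

def lift2 (f : M → M → M)
    (hf : ∀ {x y x' y' : M}, P.rel x x' → P.rel y y' → P.rel (f x y) (f x' y')) :
    QuotM P → QuotM P → QuotM P :=
  Quotient.lift₂ (fun a b => (mk (f a b) : QuotM P))
    (fun _ _ _ _ h1 h2 => Quotient.sound (hf h1 h2))

instance : Max (QuotM P) := ⟨lift2 (· ⊔ ·) (fun h1 h2 => P.rel_sup h1 h2)⟩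
instance : Min (QuotM P) := ⟨lift2 (· ⊓ ·) (fun h1 h2 => P.rel_inf h1 h2)⟩
instance : Zero (QuotM P) := ⟨mk 0⟩

@[simp] lemma mk_sup_mk (a b : M) : (mk a : QuotM P) ⊔ mk b = mk (a ⊔ b) := rfl
@[simp] lemma mk_inf_mk (a b : M) : (mk a : QuotM P) ⊓ mk b = mk (a ⊓ b) := rfl

def qind2 {motive : QuotM P → QuotM P → Prop}
    (h : ∀ a b : M, motive (mk a) (mk b)) : ∀ x y, motive x y :=
  fun x y => Quotient.inductionOn₂ x y h

def qind3 {motive : QuotM P → QuotM P → QuotM P → Prop}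
    (h : ∀ a b c : M, motive (mk a) (mk b) (mk c)) : ∀ x y z, motive x y z :=
  fun x y z => Quotient.inductionOn₃ x y z h

def changLatticeQ : Lattice (QuotM P) :=
  Lattice.mk'
    (qind2 fun a b => congrArg mk (sup_comm a b))
    (qind3 fun a b c => congrArg mk (sup_assoc a b c))
    (qind2 fun a b => congrArg mk (inf_comm a b))
    (qind3 fun a b c => congrArg mk (inf_assoc a b c))
    (qind2 fun a b => congrArg mk sup_inf_self)
    (qind2 fun a b => congrArg mk inf_sup_self)

instance : DistribLattice (QuotM P) :=
  letI : Lattice (QuotM P) := changLatticeQ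
  { changLatticeQ with
    le_sup_inf := qind3 fun a b c =>
      le_of_eq (congrArg mk (sup_inf_left a b c).symm) }

lemma mk_le_mk_iff {a b : M} : (mk a : QuotM P) ≤ mk b ↔ ominus a b ∈ P.carrier := by
  rw [← sup_eq_right (a := (mk a : QuotM P))]
  show (mk (a ⊔ b) : QuotM P) = mk b ↔ _
  rw [mk_eq_mk_iff]
  constructor
  · intro h
    have h1 := h.1
    rwa [sup_osub, osub_self, sup_eq_left.2 (WEMV.zero_le _)] at h1
  · intro h
    constructor
    · rwa [sup_osub, osub_self, sup_eq_left.2 (WEMV.zero_le _)]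
    · rw [osub_eq_zero le_sup_right]
      exact P.zero_mem

instance instWEMVQuot : WEMV (QuotM P) where
  oplus := lift2 oplus (fun h1 h2 => P.rel_oplus h1 h2)
  ominus := lift2 ominus (fun h1 h2 => P.rel_ominus h1 h2)
  zero_le := fun x => by
    induction x using Quotient.ind
    next a =>
      show (mk 0 : QuotM P) ≤ mk a
      rw [mk_le_mk_iff, zero_osub]
      exact P.zero_mem
  oplus_comm := qind2 fun a b => congrArg mk (oplus_comm a b)
  oplus_assoc := qind3 fun a b c => congrArg mk (oplus_assoc a b c)
  oplus_zero := fun x => by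
    induction x using Quotient.ind
    next a => exact congrArg mk (oplus_zero a)
  ominus_oplus_le := qind2 fun a b => by
    show (mk (ominus (oplus a b) a) : QuotM P) ≤ mk b
    rw [mk_le_mk_iff, osub_eq_zero (ominus_oplus_le a b)]
    exact P.zero_mem
  oplus_ominus := qind2 fun a b => congrArg mk (oplus_ominus a b)
  ominus_inf := qind2 fun a b => congrArg mk (ominus_inf a b)
  ominus_ominus := qind2 fun a b => congrArg mk (ominus_ominus a b)
  ominus_sup := qind3 fun a b c => congrArg mk (ominus_sup a b c)
  inf_ominus := qind3 fun a b c => congrArg mk (inf_ominus a b c)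
  ominus_oplus_assoc := qind3 fun a b c => congrArg mk (ominus_oplus_assoc a b c)
  oplus_sup := qind3 fun a b c => congrArg mk (oplus_sup a b c)

lemma linear : ∀ x y : QuotM P, x ≤ y ∨ y ≤ x :=
  qind2 fun a b => by
    rcases P.prime a b with h | h
    · exact Or.inl (mk_le_mk_iff.2 h)
    · exact Or.inr (mk_le_mk_iff.2 h)

end QuotM

/-! ### Existence of prime ideals -/

def nmul : ℕ → M → M
  | 0, _ => 0
  | n + 1, a => oplus a (nmul n a)

lemma nmul_add (m n : ℕ) (a : M) :
    nmul (m + n) a = oplus (nmul m a) (nmul n a) := by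
  induction m with
  | zero => simp [nmul, zero_oplus]
  | succ k ih =>
      have : k + 1 + n = (k + n) + 1 := by omega
      rw [this]
      show oplus a (nmul (k + n) a) = oplus (oplus a (nmul k a)) (nmul n a)
      rw [ih, oplus_assoc]

lemma inf_nmul_of_disj {a b : M} (h : a ⊓ b = 0) (n : ℕ) : a ⊓ nmul n b = 0 := by
  induction n with
  | zero =>
      show a ⊓ (0 : M) = 0
      exact le_antisymm inf_le_right (WEMV.zero_le _)
  | succ k ih =>
      show a ⊓ oplus b (nmul k b) = 0
      rw [inf_oplus_of_disj h]
      exact ih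

lemma oplus_oplus_oplus_comm (a b c d : M) :
    oplus (oplus a b) (oplus c d) = oplus (oplus a c) (oplus b d) := by
  rw [oplus_assoc a b (oplus c d), ← oplus_assoc b c d, oplus_comm b c,
    oplus_assoc c b d, ← oplus_assoc a c (oplus b d)]

/-- The ideal generated by an ideal `I` and an element `a`. -/
def genBy (I : Set M) (a : M) : Set M :=
  {z | ∃ i ∈ I, ∃ n : ℕ, z ≤ oplus i (nmul n a)}

lemma exists_prime_not_mem {c : M} (hc : c ≠ 0) :
    ∃ P : PrimeIdeal M, c ∉ P.carrier := by
  classical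
  set S : Set (Set M) :=
    {I | ((0 : M) ∈ I ∧ (∀ {x y : M}, x ≤ y → y ∈ I → x ∈ I) ∧
      (∀ {x y : M}, x ∈ I → y ∈ I → oplus x y ∈ I)) ∧ c ∉ I} with hS
  have h0 : {(0 : M)} ∈ S := by
    refine ⟨⟨rfl, ?_, ?_⟩, ?_⟩
    · intro x y hxy hy
      rw [Set.mem_singleton_iff] at hy ⊢
      subst hy
      exact le_antisymm hxy (WEMV.zero_le x)
    · intro x y hx hy
      rw [Set.mem_singleton_iff] at hx hy ⊢
      subst hx; subst hy
      exact oplus_zero 0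
    · simpa using hc
  have hsep : ∀ ch ⊆ S, IsChain (· ⊆ ·) ch → ch.Nonempty →
      ∃ ub ∈ S, ∀ s ∈ ch, s ⊆ ub := by
    intro ch hchS hchain hne
    refine ⟨⋃₀ ch, ⟨⟨?_, ?_, ?_⟩, ?_⟩, fun s hs => Set.subset_sUnion_of_mem hs⟩
    · obtain ⟨s, hs⟩ := hne
      exact ⟨s, hs, (hchS hs).1.1⟩
    · rintro x y hxy ⟨s, hs, hys⟩
      exact ⟨s, hs, (hchS hs).1.2.1 hxy hys⟩
    · rintro x y ⟨s, hs, hxs⟩ ⟨t, ht, hyt⟩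
      rcases hchain.total hs ht with hst | hts
      · exact ⟨t, ht, (hchS ht).1.2.2 (hst hxs) hyt⟩
      · exact ⟨s, hs, (hchS hs).1.2.2 hxs (hts hyt)⟩
    · rintro ⟨s, hs, hcs⟩
      exact (hchS hs).2 hcs
  obtain ⟨m, -, hmax⟩ := zorn_subset_nonempty S hsep {0} h0
  have hmS := hmax.prop
  have hideal := hmS.1
  have hcm : c ∉ m := hmS.2
  -- m is prime
  have hprime : ∀ x y : M, ominus x y ∈ m ∨ ominus y x ∈ m := by
    intro x y
    by_contra hcon
    push_neg at hcon
    obtain ⟨hx, hy⟩ := hcon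
    set a := ominus x y with ha
    set b := ominus y x with hb
    have hdisj : a ⊓ b = 0 := osub_inf_osub x y
    -- generated ideals
    have hgen : ∀ d : M, d ∉ m → c ∈ genBy m d := by
      intro d hd
      have hgi : ((0:M) ∈ genBy m d ∧ (∀ {x y : M}, x ≤ y → y ∈ genBy m d → x ∈ genBy m d) ∧
          (∀ {x y : M}, x ∈ genBy m d → y ∈ genBy m d → oplus x y ∈ genBy m d)) := by
        refine ⟨⟨0, hideal.1, 0, WEMV.zero_le _⟩, ?_, ?_⟩
        · rintro u v huv ⟨i, hi, n, hv⟩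
          exact ⟨i, hi, n, huv.trans hv⟩
        · rintro u v ⟨i, hi, n, hu⟩ ⟨j, hj, k, hv⟩
          refine ⟨oplus i j, hideal.2.2 hi hj, n + k, ?_⟩
          calc oplus u v ≤ oplus (oplus i (nmul n d)) (oplus j (nmul k d)) := by
                exact le_trans (oplus_le_oplus_left hu _) (oplus_le_oplus_right hv _)
            _ = oplus (oplus i j) (nmul (n + k) d) := by
                rw [oplus_oplus_oplus_comm, nmul_add]
      have hsub : m ⊆ genBy m d := by
        intro z hz
        refine ⟨z, hz, 0, ?_⟩
        show z ≤ oplus z 0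
        rw [oplus_zero]
      have hdIn : d ∈ genBy m d := by
        refine ⟨0, hideal.1, 1, ?_⟩
        show d ≤ oplus 0 (oplus d 0)
        rw [oplus_zero, zero_oplus]
      by_contra hcg
      have hgS : genBy m d ∈ S := ⟨hgi, hcg⟩
      have := hmax.2 hgS hsub
      exact hd (this hdIn)
    obtain ⟨i, hi, n, hci⟩ := hgen a hx
    obtain ⟨j, hj, k, hcj⟩ := hgen b hy
    have hdisj2 : nmul n a ⊓ nmul k b = 0 := by
      have h1 : nmul k b ⊓ a = 0 := by
        rw [inf_comm]
        exact inf_nmul_of_disj hdisj k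
      have h2 := inf_nmul_of_disj h1 n
      rwa [inf_comm] at h2
    have hcij : c ≤ oplus i j := by
      have hstep : c ≤ oplus (oplus i j) (nmul n a) ⊓ oplus (oplus i j) (nmul k b) := by
        refine le_inf ?_ ?_
        · exact hci.trans (oplus_le_oplus_left (le_oplus_self i j) _)
        · refine hcj.trans ?_
          refine oplus_le_oplus_left ?_ _
          rw [oplus_comm]
          exact le_oplus_self j i
      rw [← oplus_inf, hdisj2, oplus_zero] at hstep
      exact hstep
    exact hcm (hideal.2.1 hcij (hideal.2.2 hi hj))
  exact ⟨⟨m, hideal.1, fun h1 h2 => hideal.2.1 h1 h2,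
      fun h1 h2 => hideal.2.2 h1 h2, hprime⟩, hcm⟩

end WEMV

/-! ### Product instance -/

instance piWEMV {ι : Type u} (g : ι → Type u) [inst : ∀ i, WEMV (g i)] :
    WEMV (∀ i, g i) where
  oplus x y := fun i => WEMV.oplus (x i) (y i)
  ominus x y := fun i => WEMV.ominus (x i) (y i)
  zero_le x := fun i => WEMV.zero_le (x i)
  oplus_comm x y := funext fun i => WEMV.oplus_comm (x i) (y i)
  oplus_assoc x y z := funext fun i => WEMV.oplus_assoc (x i) (y i) (z i)
  oplus_zero x := funext fun i => WEMV.oplus_zero (x i)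
  ominus_oplus_le x y := fun i => WEMV.ominus_oplus_le (x i) (y i)
  oplus_ominus x y := funext fun i => WEMV.oplus_ominus (x i) (y i)
  ominus_inf x y := funext fun i => WEMV.ominus_inf (x i) (y i)
  ominus_ominus x z := funext fun i => WEMV.ominus_ominus (x i) (z i)
  ominus_sup x y z := funext fun i => WEMV.ominus_sup (x i) (y i) (z i)
  inf_ominus x y z := funext fun i => WEMV.inf_ominus (x i) (y i) (z i)
  ominus_oplus_assoc x y z := funext fun i => WEMV.ominus_oplus_assoc (x i) (y i) (z i)
  oplus_sup x y z := funext fun i => WEMV.oplus_sup (x i) (y i) (z i)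

theorem stmt18' (M : Type u) [WEMV M] :
    ∃ (N : Type u) (instN : WEMV N) (f : M → N),
      @HasTop N instN ∧ @IsWEMVEmbedding M _ N instN f := by
  classical
  have H : ∀ P : WEMV.PrimeIdeal M, ∃ (N : Type u) (instN : WEMV N)
      (f : WEMV.QuotM P → N), @HasTop N instN ∧ @IsWEMVEmbedding (WEMV.QuotM P) _ N instN f :=
    fun P => chain_embed (WEMV.QuotM P) WEMV.QuotM.linear
  choose N instN f htop hemb using H
  obtain ⟨t, ht⟩ : ∃ t : ∀ P, N P, ∀ (P) (y : N P), y ≤ t P := by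
    have := fun P => htop P
    choose t ht using this
    exact ⟨t, ht⟩
  refine ⟨∀ P : WEMV.PrimeIdeal M, N P, inferInstance,
    fun x P => f P (WEMV.QuotM.mk x), ⟨t, fun y P => ht P (y P)⟩, ?_, ?_, ?_, ?_, ?_, ?_⟩
  · -- injectivity
    intro x y hxy
    by_contra hne
    have hrel : ∀ P : WEMV.PrimeIdeal M, P.rel x y := by
      intro P
      exact WEMV.QuotM.mk_eq_mk_iff.1 ((hemb P).1 (congrFun hxy P))
    have hxy0 : WEMV.ominus x y ≠ 0 ∨ WEMV.ominus y x ≠ 0 := by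
      by_contra hcon
      push_neg at hcon
      exact hne (le_antisymm (WEMV.le_of_osub_eq_zero hcon.1)
        (WEMV.le_of_osub_eq_zero hcon.2))
    rcases hxy0 with hc | hc
    · obtain ⟨P, hP⟩ := WEMV.exists_prime_not_mem hc
      exact hP (hrel P).1
    · obtain ⟨P, hP⟩ := WEMV.exists_prime_not_mem hc
      exact hP (hrel P).2
  · funext P
    exact (hemb P).2.1
  · intro x y
    funext P
    exact (hemb P).2.2.1 (WEMV.QuotM.mk x) (WEMV.QuotM.mk y)
  · intro x y
    funext P
    exact (hemb P).2.2.2.1 (WEMV.QuotM.mk x) (WEMV.QuotM.mk y)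
  · intro x y
    funext P
    exact (hemb P).2.2.2.2.1 (WEMV.QuotM.mk x) (WEMV.QuotM.mk y)
  · intro x y
    funext P
    exact (hemb P).2.2.2.2.2 (WEMV.QuotM.mk x) (WEMV.QuotM.mk y)

theorem stmt18 (M : Type u) [WEMV M] :
    ∃ (N : Type u) (instN : WEMV N) (f : M → N),
      @HasTop N instN ∧ @IsWEMVEmbedding M _ N instN f := by
  exact stmt18' M
end
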